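/- Let A, B_1, ..., B_k be subspaces of a finite-dimensional vector space V over a field, and let f_i : A → V (for i = 1, ..., k) be linear maps with the range of f_i contained in B_i, such that f_1(u) + ... + f_k(u) = 0 for all u ∈ A. Then there is a subspace A' of A with dim A − dim A' ≤ dim B_1 + ... + dim B_k − dim(B_1 + ... + B_k) on which every f_i vanishes. -/

import Mathlib

/-- If `f i : A → V` are linear maps with range of `f i` in `B i` and `∑ i, f i = 0` on `A`,
then all `f i` vanish on a subspace of `A` of codimension at most
`∑ i, dim (B i) - dim (B 1 + ⋯ + B k)` in `A`. -/
theorem exists_kernel_subspace_of_sum_eq_zero_family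
    {F V : Type*} [Field F] [AddCommGroup V] [Module F V] [FiniteDimensional F V]
    (k : ℕ) (A : Submodule F V) (B : Fin k → Submodule F V) (f : Fin k → (↥A →ₗ[F] V))
    (hf : ∀ i, LinearMap.range (f i) ≤ B i)
    (hsum : ∀ u : ↥A, ∑ i : Fin k, f i u = 0) :
    ∃ A' : Submodule F ↥A,
      (Module.finrank F ↥A : ℤ) - Module.finrank F ↥A' ≤
        (∑ i : Fin k, (Module.finrank F ↥(B i) : ℤ)) - Module.finrank F ↥(⨆ i, B i) ∧
      ∀ u ∈ A', ∀ i, f i u = 0 := by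
  classical
  -- the combined map into the product of the B i
  set Φ : ↥A →ₗ[F] (∀ i, ↥(B i)) :=
    LinearMap.pi (fun i => (f i).codRestrict (B i) (fun u => hf i ⟨u, rfl⟩)) with hΦ
  -- the summation map
  set σ : (∀ i, ↥(B i)) →ₗ[F] V :=
    LinearMap.lsum F (fun i => ↥(B i)) F (fun i => (B i).subtype) with hσ
  refine ⟨LinearMap.ker Φ, ?_, ?_⟩
  · -- range σ = ⨆ B i
    have hrange : LinearMap.range σ = ⨆ i, B i := by
      apply le_antisymm
      · rintro _ ⟨x, rfl⟩
        simp only [hσ, LinearMap.lsum_apply, LinearMap.coe_sum, Finset.sum_apply,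
          LinearMap.coe_comp, Function.comp_apply, LinearMap.proj_apply,
          Submodule.coe_subtype]
        exact Submodule.sum_mem _ fun i _ => Submodule.mem_iSup_of_mem i (x i).2
      · refine iSup_le fun i => fun b hb => ?_
        refine ⟨Pi.single i ⟨b, hb⟩, ?_⟩
        simp only [hσ, LinearMap.lsum_apply, LinearMap.coe_sum, Finset.sum_apply,
          LinearMap.coe_comp, Function.comp_apply, LinearMap.proj_apply,
          Submodule.coe_subtype]
        rw [Finset.sum_eq_single i]
        · simp
        · intro j _ hj; simp [Pi.single_apply, hj]
        · simp
    -- range Φ ≤ ker σ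
    have hle : LinearMap.range Φ ≤ LinearMap.ker σ := by
      rintro _ ⟨u, rfl⟩
      simp only [LinearMap.mem_ker, hσ, hΦ, LinearMap.lsum_apply, LinearMap.coe_sum,
        Finset.sum_apply, LinearMap.coe_comp, Function.comp_apply, LinearMap.proj_apply,
        Submodule.coe_subtype, LinearMap.pi_apply, LinearMap.codRestrict_apply]
      exact hsum u
    have h1 : Module.finrank F ↥A =
        Module.finrank F ↥(LinearMap.range Φ) + Module.finrank F ↥(LinearMap.ker Φ) :=
      (LinearMap.finrank_range_add_finrank_ker Φ).symm
    have h2 : Module.finrank F ↥(LinearMap.range σ) + Module.finrank F ↥(LinearMap.ker σ)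
        = ∑ i, Module.finrank F ↥(B i) := by
      rw [LinearMap.finrank_range_add_finrank_ker σ, Module.finrank_pi_fintype]
    have h3 : Module.finrank F ↥(LinearMap.range Φ) ≤ Module.finrank F ↥(LinearMap.ker σ) :=
      Submodule.finrank_mono hle
    rw [hrange] at h2
    have h4 : ((∑ i, Module.finrank F ↥(B i) : ℕ) : ℤ) = ∑ i, (Module.finrank F ↥(B i) : ℤ) := by
      push_cast; rfl
    rw [← h4]
    push_cast [h1, ← h2]
    omega
  · intro u hu i
    have hu' : Φ u = 0 := hu
    have : ((Φ u) i : V) = ((0 : ∀ j, ↥(B j)) i : V) := congrArg (fun g => ((g i : ↥(B i)) : V)) hu'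
    simpa [hΦ] using this
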